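/- Let X(u,v) = (e^{vJ}α(u), φ(u), hv) be an h-pitched helicoidal surface in ℍ²×ℝ with generating curve σ = (α, φ) ⊂ ℍ², α unit-speed. With a = μφ', b = (1+μ²)/φ, c = −φ'/h, the mean curvature satisfies H = (ρ/φ)·[(φ²k − μ(1+μ²))(h² + r²) + μ(1+μ²)φ²] / (2(τ² + h²(1+μ²))), where ρ = (a² + b² − μ² + c²)^{−1/2}, k is the curvature of α, τ = ⟨α,T⟩, μ = ⟨α,N⟩, r² = τ² + μ². -/

import Mathlib

open Filter

noncomputable section

/-- `τ = ⟨α, T⟩` for the unit-speed generating plane curve `α = (α₁, α₂)`. -/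
def tauF (α₁ α₂ : ℝ → ℝ) (u : ℝ) : ℝ := α₁ u * deriv α₁ u + α₂ u * deriv α₂ u

/-- `μ = ⟨α, N⟩`, `N = JT`. -/
def muF (α₁ α₂ : ℝ → ℝ) (u : ℝ) : ℝ := α₂ u * deriv α₁ u - α₁ u * deriv α₂ u

/-- curvature `k = ⟨α'', N⟩` of the plane curve `α`. -/
def curvF (α₁ α₂ : ℝ → ℝ) (u : ℝ) : ℝ :=
  deriv (deriv α₁) u * (-(deriv α₂ u)) + deriv (deriv α₂) u * deriv α₁ u

/-- first component of the helicoidal parameterization `X(u,v) = (e^{vJ}α(u), φ(u), hv)`. -/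
def X1 (α₁ α₂ : ℝ → ℝ) (u v : ℝ) : ℝ := Real.cos v * α₁ u - Real.sin v * α₂ u

/-- second component of `X`. -/
def X2 (α₁ α₂ : ℝ → ℝ) (u v : ℝ) : ℝ := Real.sin v * α₁ u + Real.cos v * α₂ u

/-- `E = ⟨X_u, X_u⟩` in the Lorentzian metric `dx₁² + dx₂² − dx₃² + dt²` of `𝕃³×ℝ`. -/
def Ecoef (h : ℝ) (α₁ α₂ φ : ℝ → ℝ) (u v : ℝ) : ℝ :=
  (deriv (fun u => X1 α₁ α₂ u v) u) ^ 2 + (deriv (fun u => X2 α₁ α₂ u v) u) ^ 2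
    - (deriv φ u) ^ 2 + (deriv (fun _ : ℝ => h * v) u) ^ 2

/-- `F = ⟨X_u, X_v⟩`. -/
def Fcoef (h : ℝ) (α₁ α₂ φ : ℝ → ℝ) (u v : ℝ) : ℝ :=
  deriv (fun u => X1 α₁ α₂ u v) u * deriv (fun v => X1 α₁ α₂ u v) v
  + deriv (fun u => X2 α₁ α₂ u v) u * deriv (fun v => X2 α₁ α₂ u v) v
  - deriv φ u * deriv (fun _ : ℝ => φ u) v
  + deriv (fun _ : ℝ => h * v) u * deriv (fun v => h * v) v

/-- `G = ⟨X_v, X_v⟩`. -/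
def Gcoef (h : ℝ) (α₁ α₂ φ : ℝ → ℝ) (u v : ℝ) : ℝ :=
  (deriv (fun v => X1 α₁ α₂ u v) v) ^ 2 + (deriv (fun v => X2 α₁ α₂ u v) v) ^ 2
    - (deriv (fun _ : ℝ => φ u) v) ^ 2 + (deriv (fun v => h * v) v) ^ 2

/-- `a = μ φ'`. -/
def aF (α₁ α₂ φ : ℝ → ℝ) (u : ℝ) : ℝ := muF α₁ α₂ u * deriv φ u

/-- `b = (1 + μ²)/φ`. -/
def bF (α₁ α₂ φ : ℝ → ℝ) (u : ℝ) : ℝ := (1 + (muF α₁ α₂ u) ^ 2) / φ u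

/-- `c = −φ'/h`. -/
def cF (h : ℝ) (φ : ℝ → ℝ) (u : ℝ) : ℝ := -(deriv φ u) / h

/-- `ρ = (a² + b² − μ² + c²)^{-1/2}`. -/
def rhoF (h : ℝ) (α₁ α₂ φ : ℝ → ℝ) (u : ℝ) : ℝ :=
  (Real.sqrt ((aF α₁ α₂ φ u) ^ 2 + (bF α₁ α₂ φ u) ^ 2 - (muF α₁ α₂ u) ^ 2
    + (cF h φ u) ^ 2))⁻¹

/-- first component of the unit normal `η = ρ(e^{vJ}(aT + bN), μ, c)`. -/
def eta1 (h : ℝ) (α₁ α₂ φ : ℝ → ℝ) (u v : ℝ) : ℝ :=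
  rhoF h α₁ α₂ φ u *
    (Real.cos v * (aF α₁ α₂ φ u * deriv α₁ u + bF α₁ α₂ φ u * (-(deriv α₂ u)))
     - Real.sin v * (aF α₁ α₂ φ u * deriv α₂ u + bF α₁ α₂ φ u * deriv α₁ u))

/-- second component of `η`. -/
def eta2 (h : ℝ) (α₁ α₂ φ : ℝ → ℝ) (u v : ℝ) : ℝ :=
  rhoF h α₁ α₂ φ u *
    (Real.sin v * (aF α₁ α₂ φ u * deriv α₁ u + bF α₁ α₂ φ u * (-(deriv α₂ u)))
     + Real.cos v * (aF α₁ α₂ φ u * deriv α₂ u + bF α₁ α₂ φ u * deriv α₁ u))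

/-- third component of `η`. -/
def eta3 (h : ℝ) (α₁ α₂ φ : ℝ → ℝ) (u : ℝ) : ℝ := rhoF h α₁ α₂ φ u * muF α₁ α₂ u

/-- fourth (vertical) component of `η`. -/
def eta4 (h : ℝ) (α₁ α₂ φ : ℝ → ℝ) (u : ℝ) : ℝ := rhoF h α₁ α₂ φ u * cF h φ u

/-- `e = ⟨X_uu, η⟩`. -/
def ecoef (h : ℝ) (α₁ α₂ φ : ℝ → ℝ) (u v : ℝ) : ℝ :=
  deriv (fun u => deriv (fun u => X1 α₁ α₂ u v) u) u * eta1 h α₁ α₂ φ u v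
  + deriv (fun u => deriv (fun u => X2 α₁ α₂ u v) u) u * eta2 h α₁ α₂ φ u v
  - deriv (deriv φ) u * eta3 h α₁ α₂ φ u
  + deriv (fun u => deriv (fun _ : ℝ => h * v) u) u * eta4 h α₁ α₂ φ u

/-- `f = ⟨X_uv, η⟩`. -/
def fcoef (h : ℝ) (α₁ α₂ φ : ℝ → ℝ) (u v : ℝ) : ℝ :=
  deriv (fun v => deriv (fun u => X1 α₁ α₂ u v) u) v * eta1 h α₁ α₂ φ u v
  + deriv (fun v => deriv (fun u => X2 α₁ α₂ u v) u) v * eta2 h α₁ α₂ φ u v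
  - deriv (fun _ : ℝ => deriv φ u) v * eta3 h α₁ α₂ φ u
  + deriv (fun v => deriv (fun _ : ℝ => h * v) u) v * eta4 h α₁ α₂ φ u

/-- `g = ⟨X_vv, η⟩`. -/
def gcoef (h : ℝ) (α₁ α₂ φ : ℝ → ℝ) (u v : ℝ) : ℝ :=
  deriv (fun v => deriv (fun v => X1 α₁ α₂ u v) v) v * eta1 h α₁ α₂ φ u v
  + deriv (fun v => deriv (fun v => X2 α₁ α₂ u v) v) v * eta2 h α₁ α₂ φ u v
  - deriv (fun v => deriv (fun _ : ℝ => φ u) v) v * eta3 h α₁ α₂ φ u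
  + deriv (fun v => deriv (fun v => h * v) v) v * eta4 h α₁ α₂ φ u

/-- mean curvature `H = (Eg − 2fF + Ge)/(2(EG − F²))`. -/
def Hmean (h : ℝ) (α₁ α₂ φ : ℝ → ℝ) (u v : ℝ) : ℝ :=
  (Ecoef h α₁ α₂ φ u v * gcoef h α₁ α₂ φ u v
    - 2 * fcoef h α₁ α₂ φ u v * Fcoef h α₁ α₂ φ u v
    + Gcoef h α₁ α₂ φ u v * ecoef h α₁ α₂ φ u v) /
  (2 * (Ecoef h α₁ α₂ φ u v * Gcoef h α₁ α₂ φ u v - (Fcoef h α₁ α₂ φ u v) ^ 2))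

/-- the rotator condition `H = ⟨Jπ(X), η⟩`, with `Jπ(X) = (−X₂, X₁, 0, 0)`. -/
def IsRotator (h : ℝ) (α₁ α₂ φ : ℝ → ℝ) : Prop :=
  ∀ u v : ℝ, Hmean h α₁ α₂ φ u v =
    -(X2 α₁ α₂ u v) * eta1 h α₁ α₂ φ u v + X1 α₁ α₂ u v * eta2 h α₁ α₂ φ u v

end


private lemma key_helper (p dp ddp k mu tau R h : ℝ) (hp : 0 < p) (hh : h ≠ 0)
    (C1 : p * dp = tau)
    (C2 : dp ^ 2 + p * ddp = 1 + k * mu)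
    (C3 : tau ^ 2 + mu ^ 2 = p ^ 2 - 1) :
    ((1 - dp ^ 2) * (R * (-(mu * dp * tau + (1 + mu ^ 2) / p * mu)))
        - 2 * (R * ((1 + mu ^ 2) / p)) * (-mu)
        + ((p ^ 2 - 1) + h ^ 2) * (R * ((1 + mu ^ 2) / p * k - ddp * mu)))
      / (2 * ((tau ^ 2 + h ^ 2 * (1 + mu ^ 2)) / p ^ 2))
    = R / p * (((p ^ 2 * k - mu * (1 + mu ^ 2)) * (h ^ 2 + (tau ^ 2 + mu ^ 2))
        + mu * (1 + mu ^ 2) * p ^ 2) / (2 * (tau ^ 2 + h ^ 2 * (1 + mu ^ 2)))) := by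
  have hp' : p ≠ 0 := hp.ne'
  have hD : 0 < tau ^ 2 + h ^ 2 * (1 + mu ^ 2) := by
    have h2 : 0 < h ^ 2 := by positivity
    nlinarith [sq_nonneg tau, sq_nonneg mu, sq_nonneg (h * mu)]
  have hddp : ddp = (1 + k * mu - dp ^ 2) / p := by
    field_simp
    linear_combination C2
  subst C1
  rw [hddp]
  field_simp
  linear_combination
    (R * (mu * h ^ 2 + mu ^ 3 + p ^ 2 * mu - p ^ 2 * k + p ^ 2 * dp ^ 2 * mu)) * C3

/-- the mean curvature of an `h`-pitched helicoidal surface in `ℍ²×ℝ`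
satisfies `H = (ρ/φ)·((φ²k − μ(1+μ²))(h² + r²) + μ(1+μ²)φ²)/(2(τ² + h²(1+μ²)))`. -/
theorem mean_curvature_formula (h : ℝ) (hh : 0 < h) (α₁ α₂ φ : ℝ → ℝ)
    (hα₁ : ContDiff ℝ 2 α₁) (hα₂ : ContDiff ℝ 2 α₂) (hφ : ContDiff ℝ 2 φ)
    (hunit : ∀ u : ℝ, (deriv α₁ u) ^ 2 + (deriv α₂ u) ^ 2 = 1)
    (hhyp : ∀ u : ℝ, (φ u) ^ 2 = 1 + ((α₁ u) ^ 2 + (α₂ u) ^ 2))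
    (hpos : ∀ u : ℝ, 0 < φ u) :
    ∀ u v : ℝ,
      Hmean h α₁ α₂ φ u v =
        (rhoF h α₁ α₂ φ u / φ u) *
          ((((φ u) ^ 2 * curvF α₁ α₂ u - muF α₁ α₂ u * (1 + (muF α₁ α₂ u) ^ 2)) *
              (h ^ 2 + ((tauF α₁ α₂ u) ^ 2 + (muF α₁ α₂ u) ^ 2)) +
            muF α₁ α₂ u * (1 + (muF α₁ α₂ u) ^ 2) * (φ u) ^ 2) /
          (2 * ((tauF α₁ α₂ u) ^ 2 + h ^ 2 * (1 + (muF α₁ α₂ u) ^ 2)))) := by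
  intro u v
  have hd1 : ∀ x, DifferentiableAt ℝ α₁ x := fun x =>
    (hα₁.differentiable two_ne_zero).differentiableAt
  have hd2 : ∀ x, DifferentiableAt ℝ α₂ x := fun x =>
    (hα₂.differentiable two_ne_zero).differentiableAt
  have hdφ : ∀ x, DifferentiableAt ℝ φ x := fun x =>
    (hφ.differentiable two_ne_zero).differentiableAt
  have h2 : (2 : WithTop ℕ∞) = 1 + 1 := by norm_num
  rw [h2] at hα₁ hα₂ hφ
  have hdd1 : ∀ x, DifferentiableAt ℝ (deriv α₁) x := fun x =>
    (((contDiff_succ_iff_deriv.mp hα₁).2.2).differentiable one_ne_zero).differentiableAt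
  have hdd2 : ∀ x, DifferentiableAt ℝ (deriv α₂) x := fun x =>
    (((contDiff_succ_iff_deriv.mp hα₂).2.2).differentiable one_ne_zero).differentiableAt
  have hddφ : ∀ x, DifferentiableAt ℝ (deriv φ) x := fun x =>
    (((contDiff_succ_iff_deriv.mp hφ).2.2).differentiable one_ne_zero).differentiableAt
  have hcs : Real.cos v ^ 2 + Real.sin v ^ 2 = 1 := Real.cos_sq_add_sin_sq v
  -- u-derivatives of X1, X2 (for all u, v)
  have dX1u : ∀ (x w : ℝ), deriv (fun u => X1 α₁ α₂ u w) x
      = Real.cos w * deriv α₁ x - Real.sin w * deriv α₂ x := by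
    intro x w
    simp only [X1]
    rw [deriv_fun_sub ((hd1 x).const_mul _) ((hd2 x).const_mul _),
      deriv_const_mul _ (hd1 x), deriv_const_mul _ (hd2 x)]
  have dX2u : ∀ (x w : ℝ), deriv (fun u => X2 α₁ α₂ u w) x
      = Real.sin w * deriv α₁ x + Real.cos w * deriv α₂ x := by
    intro x w
    simp only [X2]
    rw [deriv_fun_add ((hd1 x).const_mul _) ((hd2 x).const_mul _),
      deriv_const_mul _ (hd1 x), deriv_const_mul _ (hd2 x)]
  -- second u-derivatives
  have dX1uu : deriv (fun u => deriv (fun u => X1 α₁ α₂ u v) u) u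
      = Real.cos v * deriv (deriv α₁) u - Real.sin v * deriv (deriv α₂) u := by
    have : (fun u => deriv (fun u => X1 α₁ α₂ u v) u)
        = fun u => Real.cos v * deriv α₁ u - Real.sin v * deriv α₂ u :=
      funext fun x => dX1u x v
    rw [this, deriv_fun_sub ((hdd1 u).const_mul _) ((hdd2 u).const_mul _),
      deriv_const_mul _ (hdd1 u), deriv_const_mul _ (hdd2 u)]
  have dX2uu : deriv (fun u => deriv (fun u => X2 α₁ α₂ u v) u) u
      = Real.sin v * deriv (deriv α₁) u + Real.cos v * deriv (deriv α₂) u := by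
    have : (fun u => deriv (fun u => X2 α₁ α₂ u v) u)
        = fun u => Real.sin v * deriv α₁ u + Real.cos v * deriv α₂ u :=
      funext fun x => dX2u x v
    rw [this, deriv_fun_add ((hdd1 u).const_mul _) ((hdd2 u).const_mul _),
      deriv_const_mul _ (hdd1 u), deriv_const_mul _ (hdd2 u)]
  -- v-derivatives
  have dX1v : ∀ w : ℝ, deriv (fun v => X1 α₁ α₂ u v) w
      = -Real.sin w * α₁ u - Real.cos w * α₂ u := by
    intro w
    have : HasDerivAt (fun v => X1 α₁ α₂ u v) (-Real.sin w * α₁ u - Real.cos w * α₂ u) w := by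
      simpa [X1] using
        ((Real.hasDerivAt_cos w).mul_const (α₁ u)).fun_sub ((Real.hasDerivAt_sin w).mul_const (α₂ u))
    exact this.deriv
  have dX2v : ∀ w : ℝ, deriv (fun v => X2 α₁ α₂ u v) w
      = Real.cos w * α₁ u + -Real.sin w * α₂ u := by
    intro w
    have : HasDerivAt (fun v => X2 α₁ α₂ u v) (Real.cos w * α₁ u + -Real.sin w * α₂ u) w := by
      simpa [X2] using
        ((Real.hasDerivAt_sin w).mul_const (α₁ u)).fun_add ((Real.hasDerivAt_cos w).mul_const (α₂ u))
    exact this.deriv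
  have dX1vv : deriv (fun v => deriv (fun v => X1 α₁ α₂ u v) v) v
      = -Real.cos v * α₁ u + Real.sin v * α₂ u := by
    have : (fun v => deriv (fun v => X1 α₁ α₂ u v) v)
        = fun w => -Real.sin w * α₁ u - Real.cos w * α₂ u := funext dX1v
    rw [this]
    have h1 : HasDerivAt (fun w => -Real.sin w * α₁ u - Real.cos w * α₂ u)
        (-Real.cos v * α₁ u + Real.sin v * α₂ u) v := by
      have := (((Real.hasDerivAt_sin v).fun_neg.mul_const (α₁ u)).fun_sub
        ((Real.hasDerivAt_cos v).mul_const (α₂ u)))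
      exact this.congr_deriv (by ring)
    exact h1.deriv
  have dX2vv : deriv (fun v => deriv (fun v => X2 α₁ α₂ u v) v) v
      = -Real.sin v * α₁ u + -Real.cos v * α₂ u := by
    have : (fun v => deriv (fun v => X2 α₁ α₂ u v) v)
        = fun w => Real.cos w * α₁ u + -Real.sin w * α₂ u := funext dX2v
    rw [this]
    have h1 : HasDerivAt (fun w => Real.cos w * α₁ u + -Real.sin w * α₂ u)
        (-Real.sin v * α₁ u + -Real.cos v * α₂ u) v := by
      have := ((Real.hasDerivAt_cos v).mul_const (α₁ u)).fun_add
        (((Real.hasDerivAt_sin v).fun_neg.mul_const (α₂ u)))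
      exact this.congr_deriv (by ring)
    exact h1.deriv
  -- mixed derivatives (derivative in v of u-derivative)
  have dX1uv : deriv (fun v => deriv (fun u => X1 α₁ α₂ u v) u) v
      = -Real.sin v * deriv α₁ u - Real.cos v * deriv α₂ u := by
    have : (fun v => deriv (fun u => X1 α₁ α₂ u v) u)
        = fun w => Real.cos w * deriv α₁ u - Real.sin w * deriv α₂ u :=
      funext fun w => dX1u u w
    rw [this]
    exact (((Real.hasDerivAt_cos v).mul_const _).sub
      ((Real.hasDerivAt_sin v).mul_const _)).deriv
  have dX2uv : deriv (fun v => deriv (fun u => X2 α₁ α₂ u v) u) v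
      = Real.cos v * deriv α₁ u + -Real.sin v * deriv α₂ u := by
    have : (fun v => deriv (fun u => X2 α₁ α₂ u v) u)
        = fun w => Real.sin w * deriv α₁ u + Real.cos w * deriv α₂ u :=
      funext fun w => dX2u u w
    rw [this]
    exact (((Real.hasDerivAt_sin v).mul_const _).add
      ((Real.hasDerivAt_cos v).mul_const _)).deriv
  -- trivial derivatives
  have dhv_u : ∀ x : ℝ, deriv (fun _ : ℝ => h * v) x = 0 := fun x => deriv_const x _
  have dhv_v : ∀ w : ℝ, deriv (fun v => h * v) w = h := by
    intro w; simpa using ((hasDerivAt_id w).const_mul h).deriv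
  have dhv_uu : deriv (fun u => deriv (fun _ : ℝ => h * v) u) u = 0 := by
    have : (fun u : ℝ => deriv (fun _ : ℝ => h * v) u) = fun _ : ℝ => (0:ℝ) := funext dhv_u
    rw [this]; exact deriv_const u 0
  have dhv_uv : deriv (fun v => deriv (fun _ : ℝ => h * v) u) v = 0 := by
    have : (fun v : ℝ => deriv (fun _ : ℝ => h * v) u) = fun _ : ℝ => (0:ℝ) :=
      funext fun w => deriv_const u _
    rw [this]; exact deriv_const v 0
  have dhv_vv : deriv (fun v => deriv (fun v => h * v) v) v = 0 := by
    have : (fun v : ℝ => deriv (fun v => h * v) v) = fun _ : ℝ => h := funext dhv_v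
    rw [this]; exact deriv_const v h
  have dφ_v : ∀ w : ℝ, deriv (fun _ : ℝ => φ u) w = 0 := fun w => deriv_const w _
  have dφ_vv : deriv (fun v => deriv (fun _ : ℝ => φ u) v) v = 0 := by
    have : (fun v : ℝ => deriv (fun _ : ℝ => φ u) v) = fun _ : ℝ => (0:ℝ) := funext dφ_v
    rw [this]; exact deriv_const v 0
  have dφ_uv : deriv (fun _ : ℝ => deriv φ u) v = 0 := deriv_const v _
  -- structural identities from the hypotheses
  have horth : deriv α₁ u * deriv (deriv α₁) u + deriv α₂ u * deriv (deriv α₂) u = 0 := by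
    have hfe : (fun x => (deriv α₁ x) ^ 2 + (deriv α₂ x) ^ 2) = fun _ : ℝ => (1:ℝ) :=
      funext hunit
    have e1 : deriv (fun x => (deriv α₁ x) ^ 2 + (deriv α₂ x) ^ 2) u
        = 2 * deriv α₁ u * deriv (deriv α₁) u + 2 * deriv α₂ u * deriv (deriv α₂) u := by
      rw [deriv_fun_add ((hdd1 u).fun_pow 2) ((hdd2 u).fun_pow 2)]
      simp [deriv_fun_pow, hdd1 u, hdd2 u]
    rw [hfe] at e1
    simp only [deriv_const] at e1
    linarith
  have hC1 : ∀ x : ℝ, φ x * deriv φ x = α₁ x * deriv α₁ x + α₂ x * deriv α₂ x := by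
    intro x
    have hfe : (fun x => (φ x) ^ 2) = fun x => 1 + ((α₁ x) ^ 2 + (α₂ x) ^ 2) := funext hhyp
    have e1 : deriv (fun x => (φ x) ^ 2) x = 2 * φ x * deriv φ x := by
      simp [deriv_fun_pow, hdφ x]
    have e2 : deriv (fun x => 1 + ((α₁ x) ^ 2 + (α₂ x) ^ 2)) x
        = 2 * α₁ x * deriv α₁ x + 2 * α₂ x * deriv α₂ x := by
      rw [deriv_const_add]
      rw [deriv_fun_add ((hd1 x).fun_pow 2) ((hd2 x).fun_pow 2)]
      simp [deriv_fun_pow, hd1 x, hd2 x]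
    rw [hfe, e2] at e1
    linarith
  have hC2 : (deriv φ u) ^ 2 + φ u * deriv (deriv φ) u
      = 1 + (α₁ u * deriv (deriv α₁) u + α₂ u * deriv (deriv α₂) u) := by
    have hfe : (fun x => φ x * deriv φ x)
        = fun x => α₁ x * deriv α₁ x + α₂ x * deriv α₂ x := funext hC1
    have e1 : deriv (fun x => φ x * deriv φ x) u
        = deriv φ u * deriv φ u + φ u * deriv (deriv φ) u := by
      rw [deriv_fun_mul (hdφ u) (hddφ u)]
    have e2 : deriv (fun x => α₁ x * deriv α₁ x + α₂ x * deriv α₂ x) u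
        = (deriv α₁ u * deriv α₁ u + α₁ u * deriv (deriv α₁) u)
          + (deriv α₂ u * deriv α₂ u + α₂ u * deriv (deriv α₂) u) := by
      rw [deriv_fun_add ((hd1 u).fun_mul (hdd1 u)) ((hd2 u).fun_mul (hdd2 u)),
        deriv_fun_mul (hd1 u) (hdd1 u), deriv_fun_mul (hd2 u) (hdd2 u)]
    rw [hfe, e2] at e1
    linear_combination hunit u - e1
  -- coefficients of the fundamental forms
  have hE : Ecoef h α₁ α₂ φ u v = 1 - (deriv φ u) ^ 2 := by
    simp only [Ecoef, dX1u, dX2u, dhv_u]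
    linear_combination (Real.cos v ^ 2 + Real.sin v ^ 2) * hunit u + hcs
  have hF : Fcoef h α₁ α₂ φ u v = -(α₂ u * deriv α₁ u - α₁ u * deriv α₂ u) := by
    simp only [Fcoef, dX1u, dX2u, dX1v, dX2v, dhv_u, dhv_v, dφ_v]
    linear_combination (α₁ u * deriv α₂ u - α₂ u * deriv α₁ u) * hcs
  have hG : Gcoef h α₁ α₂ φ u v = ((φ u) ^ 2 - 1) + h ^ 2 := by
    simp only [Gcoef, dX1v, dX2v, dhv_v, dφ_v]
    linear_combination ((α₁ u) ^ 2 + (α₂ u) ^ 2) * hcs - hhyp u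
  -- second fundamental form coefficients
  have he : ecoef h α₁ α₂ φ u v = rhoF h α₁ α₂ φ u *
      ((1 + (α₂ u * deriv α₁ u - α₁ u * deriv α₂ u) ^ 2) / φ u *
        (deriv (deriv α₁) u * (-(deriv α₂ u)) + deriv (deriv α₂) u * deriv α₁ u)
       - deriv (deriv φ) u * (α₂ u * deriv α₁ u - α₁ u * deriv α₂ u)) := by
    simp only [ecoef, eta1, eta2, eta3, eta4, aF, bF, muF, cF, dX1uu, dX2uu, dhv_uu]
    linear_combination
      (rhoF h α₁ α₂ φ u *
        ((α₂ u * deriv α₁ u - α₁ u * deriv α₂ u) * deriv φ u *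
          (deriv α₁ u * deriv (deriv α₁) u + deriv α₂ u * deriv (deriv α₂) u)
        + (1 + (α₂ u * deriv α₁ u - α₁ u * deriv α₂ u) ^ 2) / φ u *
          (deriv (deriv α₁) u * (-(deriv α₂ u)) + deriv (deriv α₂) u * deriv α₁ u))) * hcs
      + (rhoF h α₁ α₂ φ u * ((α₂ u * deriv α₁ u - α₁ u * deriv α₂ u) * deriv φ u)) * horth
  have hf : fcoef h α₁ α₂ φ u v = rhoF h α₁ α₂ φ u *
      ((1 + (α₂ u * deriv α₁ u - α₁ u * deriv α₂ u) ^ 2) / φ u) := by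
    simp only [fcoef, eta1, eta2, eta3, eta4, aF, bF, muF, cF, dX1uv, dX2uv, dφ_uv, dhv_uv]
    linear_combination
      (rhoF h α₁ α₂ φ u * ((1 + (α₂ u * deriv α₁ u - α₁ u * deriv α₂ u) ^ 2) / φ u) *
        ((deriv α₁ u) ^ 2 + (deriv α₂ u) ^ 2)) * hcs
      + (rhoF h α₁ α₂ φ u * ((1 + (α₂ u * deriv α₁ u - α₁ u * deriv α₂ u) ^ 2) / φ u)) * hunit u
  have hg : gcoef h α₁ α₂ φ u v = rhoF h α₁ α₂ φ u *
      (-((α₂ u * deriv α₁ u - α₁ u * deriv α₂ u) * deriv φ u *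
          (α₁ u * deriv α₁ u + α₂ u * deriv α₂ u)
        + (1 + (α₂ u * deriv α₁ u - α₁ u * deriv α₂ u) ^ 2) / φ u *
          (α₂ u * deriv α₁ u - α₁ u * deriv α₂ u))) := by
    simp only [gcoef, eta1, eta2, eta3, eta4, aF, bF, muF, cF, dX1vv, dX2vv, dφ_vv, dhv_vv]
    linear_combination
      (-(rhoF h α₁ α₂ φ u *
        ((α₂ u * deriv α₁ u - α₁ u * deriv α₂ u) * deriv φ u *
          (α₁ u * deriv α₁ u + α₂ u * deriv α₂ u)
        + (1 + (α₂ u * deriv α₁ u - α₁ u * deriv α₂ u) ^ 2) / φ u *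
          (α₂ u * deriv α₁ u - α₁ u * deriv α₂ u)))) * hcs
  -- curvature relation
  have hkm : α₁ u * deriv (deriv α₁) u + α₂ u * deriv (deriv α₂) u
      = (deriv (deriv α₁) u * (-(deriv α₂ u)) + deriv (deriv α₂) u * deriv α₁ u) *
        (α₂ u * deriv α₁ u - α₁ u * deriv α₂ u) := by
    linear_combination (α₁ u * deriv α₁ u + α₂ u * deriv α₂ u) * horth
      - (α₁ u * deriv (deriv α₁) u + α₂ u * deriv (deriv α₂) u) * hunit u
  rw [hkm] at hC2
  have hC3 : (α₁ u * deriv α₁ u + α₂ u * deriv α₂ u) ^ 2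
      + (α₂ u * deriv α₁ u - α₁ u * deriv α₂ u) ^ 2 = (φ u) ^ 2 - 1 := by
    linear_combination ((α₁ u) ^ 2 + (α₂ u) ^ 2) * hunit u - hhyp u
  have hP : φ u ≠ 0 := (hpos u).ne'
  have hEGF : (1 - (deriv φ u) ^ 2) * ((φ u) ^ 2 - 1 + h ^ 2)
      - (-(α₂ u * deriv α₁ u - α₁ u * deriv α₂ u)) ^ 2
      = ((α₁ u * deriv α₁ u + α₂ u * deriv α₂ u) ^ 2
          + h ^ 2 * (1 + (α₂ u * deriv α₁ u - α₁ u * deriv α₂ u) ^ 2)) / (φ u) ^ 2 := by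
    rw [eq_div_iff (pow_ne_zero 2 hP)]
    linear_combination
      (-(φ u * deriv φ u + (α₁ u * deriv α₁ u + α₂ u * deriv α₂ u)) * ((φ u) ^ 2 - 1 + h ^ 2))
        * hC1 u
      - ((φ u) ^ 2 + h ^ 2) * hC3
  simp only [Hmean, tauF, muF, curvF]
  rw [hE, hF, hG, he, hf, hg, hEGF]
  exact key_helper _ _ _ _ _ _ _ _ (hpos u) hh.ne' (hC1 u) hC2 hC3
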